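/- There is a homeomorphism between the set of coefficient vectors in ℝⁿ of monic real degree-n polynomials with all roots in the open unit disk and the set of coefficient vectors of monic real degree-n polynomials with all roots in the open left half-plane, obtained by applying the bilinear transform λ ↦ (λ+1)/(λ−1) to the roots. -/

import Mathlib

open Polynomial

noncomputable section SchurHurwitzAux

namespace SchurHurwitzAux

/-- The generic monic polynomial with coefficient vector `a`. -/
def PP (n : ℕ) (a : Fin n → ℝ) : ℝ[X] := X ^ n + ∑ i : Fin n, C (a i) * X ^ (i : ℕ)

/-- The bilinear coefficient transform at level `n`. -/
def BT {R : Type*} [CommRing R] (n : ℕ) (p : R[X]) : R[X] :=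
  ∑ k ∈ Finset.range (n + 1), C (p.coeff k) * ((X + 1) ^ k * (X - 1) ^ (n - k))

lemma coeff_PP (n : ℕ) (a : Fin n → ℝ) (k : ℕ) :
    (PP n a).coeff k = if h : k < n then a ⟨k, h⟩ else if k = n then 1 else 0 := by
  have hsum : (∑ i : Fin n, (C (a i) * X ^ (i : ℕ) : ℝ[X])).coeff k
      = if h : k < n then a ⟨k, h⟩ else 0 := by
    rw [finset_sum_coeff]
    simp only [coeff_C_mul, coeff_X_pow]
    split_ifs with h
    · rw [Finset.sum_eq_single (⟨k, h⟩ : Fin n)]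
      · simp
      · intro b _ hb
        rw [if_neg, mul_zero]
        exact fun hk => hb (by ext; simp [hk])
      · simp
    · refine Finset.sum_eq_zero fun b _ => ?_
      have hb := b.2
      rw [if_neg (by omega), mul_zero]
  rw [PP, coeff_add, coeff_X_pow, hsum]
  split_ifs with h1 h2 h3
  · exact absurd h2 (by omega)
  · norm_num
  · rw [zero_add]
  · rw [add_zero]

lemma PP_monic (n : ℕ) (a : Fin n → ℝ) : (PP n a).Monic := by
  apply monic_X_pow_add
  apply lt_of_le_of_lt (degree_sum_le _ _)
  rw [Finset.sup_lt_iff (by exact_mod_cast WithBot.bot_lt_coe n)]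
  intro i _
  refine lt_of_le_of_lt (degree_C_mul_X_pow_le _ _) ?_
  exact_mod_cast WithBot.coe_lt_coe.mpr i.2

lemma PP_natDegree (n : ℕ) (a : Fin n → ℝ) : (PP n a).natDegree = n := by
  apply le_antisymm
  · rw [natDegree_le_iff_coeff_eq_zero]
    intro k hk
    rw [coeff_PP, dif_neg (by omega), if_neg (by omega)]
  · apply le_natDegree_of_ne_zero
    rw [coeff_PP, dif_neg (by omega), if_pos rfl]
    exact one_ne_zero

lemma monic_aux {R : Type*} [CommRing R] [Nontrivial R] (k m : ℕ) :
    ((X + 1 : R[X]) ^ k * (X - 1) ^ m).Monic := by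
  have h1 : (X + 1 : R[X]).Monic := by simpa using monic_X_add_C (1 : R)
  have h2 : (X - 1 : R[X]).Monic := by simpa using monic_X_sub_C (1 : R)
  exact (h1.pow k).mul (h2.pow m)

lemma natDegree_aux {R : Type*} [CommRing R] [Nontrivial R] (k m : ℕ) :
    ((X + 1 : R[X]) ^ k * (X - 1) ^ m).natDegree = k + m := by
  have h1 : (X + 1 : R[X]).Monic := by simpa using monic_X_add_C (1 : R)
  have h2 : (X - 1 : R[X]).Monic := by simpa using monic_X_sub_C (1 : R)
  rw [(h1.pow k).natDegree_mul (h2.pow m), h1.natDegree_pow, h2.natDegree_pow]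
  have e1 : (X + 1 : R[X]).natDegree = 1 := by simpa using natDegree_X_add_C (1 : R)
  have e2 : (X - 1 : R[X]).natDegree = 1 := by
    have := natDegree_X_sub_C (1 : R)
    simpa using this
  rw [e1, e2, mul_one, mul_one]

lemma BT_natDegree_le {R : Type*} [CommRing R] [Nontrivial R] (n : ℕ) (p : R[X]) :
    (BT n p).natDegree ≤ n := by
  refine natDegree_sum_le_of_forall_le _ _ fun k hk => ?_
  refine le_trans (natDegree_C_mul_le _ _) ?_
  rw [natDegree_aux]
  rw [Finset.mem_range] at hk
  omega

lemma BT_coeff_top {R : Type*} [CommRing R] [Nontrivial R] (n : ℕ) (p : R[X])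
    (hp : p.natDegree ≤ n) : (BT n p).coeff n = p.eval 1 := by
  rw [BT, finset_sum_coeff]
  have h : ∀ k ∈ Finset.range (n + 1),
      (C (p.coeff k) * ((X + 1 : R[X]) ^ k * (X - 1) ^ (n - k))).coeff n = p.coeff k := by
    intro k hk
    rw [Finset.mem_range] at hk
    rw [coeff_C_mul]
    have hm := monic_aux (R := R) k (n - k)
    have hd : ((X + 1 : R[X]) ^ k * (X - 1) ^ (n - k)).natDegree = n := by
      rw [natDegree_aux]; omega
    have hc := hm.coeff_natDegree
    rw [hd] at hc
    rw [hc, mul_one]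
  rw [Finset.sum_congr rfl h, eval_eq_sum_range' (lt_of_le_of_lt hp (Nat.lt_succ_self n)) 1]
  simp

lemma BT_map {R S : Type*} [CommRing R] [CommRing S] (f : R →+* S) (n : ℕ) (p : R[X]) :
    (BT n p).map f = BT n (p.map f) := by
  rw [BT, BT, Polynomial.map_sum]
  refine Finset.sum_congr rfl fun k _ => ?_
  simp [Polynomial.map_mul, Polynomial.map_pow, Polynomial.map_add, Polynomial.map_sub]

lemma BT_linear_mul {R : Type*} [CommRing R] (n : ℕ) (z : R) (q : R[X])
    (hq : q.natDegree ≤ n) :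
    BT (n + 1) ((X - C z) * q) = (C (1 - z) * X + C (1 + z)) * BT n q := by
  have h1 : (∑ k ∈ Finset.range (n + 2),
        C ((X * q).coeff k) * ((X + 1 : R[X]) ^ k * (X - 1) ^ (n + 1 - k)))
      = (X + 1) * BT n q := by
    rw [Finset.sum_range_succ']
    simp only [mul_coeff_zero, coeff_X_zero, zero_mul, map_zero, add_zero]
    rw [BT, Finset.mul_sum]
    refine Finset.sum_congr rfl fun i hi => ?_
    rw [coeff_X_mul]
    have he : n + 1 - (i + 1) = n - i := by omega
    rw [he, pow_succ]
    ring
  have h2 : (∑ k ∈ Finset.range (n + 2),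
        C z * C (q.coeff k) * ((X + 1 : R[X]) ^ k * (X - 1) ^ (n + 1 - k)))
      = C z * (X - 1) * BT n q := by
    rw [Finset.sum_range_succ, coeff_eq_zero_of_natDegree_lt (by omega : q.natDegree < n + 1)]
    rw [map_zero, mul_zero, zero_mul, add_zero, BT, Finset.mul_sum]
    refine Finset.sum_congr rfl fun i hi => ?_
    rw [Finset.mem_range] at hi
    rw [Nat.succ_sub (by omega : i ≤ n), pow_succ]
    ring
  have expand : ∀ k, (C ((X * q - C z * q).coeff k) : R[X])
      = C ((X * q).coeff k) - C z * C (q.coeff k) := by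
    intro k
    rw [coeff_sub, map_sub, coeff_C_mul, map_mul]
  rw [BT]
  simp only [sub_mul, expand]
  rw [Finset.sum_sub_distrib, h1, h2]
  simp only [map_sub, map_add, map_one]
  ring

lemma BT_multiset {K : Type*} [Field K] (s : Multiset K) (hs : ∀ z ∈ s, z ≠ 1) :
    BT (Multiset.card s) (s.map fun z => X - C z).prod
      = C ((s.map fun z => 1 - z).prod)
        * (s.map fun z => X - C ((z + 1) / (z - 1))).prod := by
  induction s using Multiset.induction with
  | empty => simp [BT]
  | cons z t ih =>
    have hz : z ≠ 1 := hs z (Multiset.mem_cons_self z t)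
    have hzs : z - 1 ≠ 0 := sub_ne_zero.mpr hz
    have key : (C (1 - z) * X + C (1 + z) : K[X])
        = C (1 - z) * (X - C ((z + 1) / (z - 1))) := by
      rw [mul_sub, ← C_mul]
      have hh : (1 - z) * ((z + 1) / (z - 1)) = -(1 + z) := by
        field_simp
        ring
      rw [hh, map_neg, sub_neg_eq_add]
    rw [Multiset.map_cons, Multiset.prod_cons, Multiset.card_cons,
      BT_linear_mul _ z _ (le_of_eq (natDegree_multiset_prod_X_sub_C_eq_card t)),
      ih (fun w hw => hs w (Multiset.mem_cons_of_mem hw)), key,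
      Multiset.map_cons, Multiset.prod_cons, Multiset.map_cons, Multiset.prod_cons, C_mul]
    ring

lemma roots_BT (n : ℕ) (p : ℝ[X]) (hm : p.Monic) (hd : p.natDegree = n)
    (h1 : p.eval 1 ≠ 0) :
    ((BT n p).map (algebraMap ℝ ℂ)).roots
      = (p.map (algebraMap ℝ ℂ)).roots.map (fun z => (z + 1) / (z - 1)) := by
  set P := p.map (algebraMap ℝ ℂ) with hP
  have hPm : P.Monic := hm.map _
  have hdeg : P.natDegree = n := (hm.natDegree_map _).trans hd
  have hcard : Multiset.card P.roots = P.natDegree :=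
    splits_iff_card_roots.mp (IsAlgClosed.splits _)
  have hr1 : ∀ z ∈ P.roots, z ≠ 1 := by
    intro z hz hz1
    subst hz1
    have hroot : P.IsRoot 1 := (mem_roots hPm.ne_zero).mp hz
    rw [IsRoot, hP, eval_map, eval₂_at_one] at hroot
    exact h1 (by simpa using hroot)
  have hprod : (P.roots.map fun a => X - C a).prod = P :=
    prod_multiset_X_sub_C_of_monic_of_roots_card_eq hPm hcard
  have key := BT_multiset P.roots hr1
  rw [hprod, hcard, hdeg] at key
  have hcne : ((P.roots.map fun z => 1 - z).prod : ℂ) ≠ 0 := by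
    refine Multiset.prod_ne_zero ?_
    intro h0
    obtain ⟨w, hw, hw0⟩ := Multiset.mem_map.mp h0
    exact hr1 w hw (by linear_combination -hw0)
  have hmm : (Multiset.map (fun z : ℂ => X - C ((z + 1) / (z - 1))) P.roots)
      = Multiset.map (fun a : ℂ => X - C a) (P.roots.map fun z => (z + 1) / (z - 1)) := by
    rw [Multiset.map_map]
    rfl
  rw [BT_map, ← hP, key, roots_C_mul _ hcne, hmm, roots_multiset_prod_X_sub_C]

def ev (n : ℕ) (a : Fin n → ℝ) : ℝ := (PP n a).eval 1

def T (n : ℕ) (a : Fin n → ℝ) : Fin n → ℝ := fun i => (BT n (PP n a)).coeff i / ev n a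

lemma PP_T (n : ℕ) (a : Fin n → ℝ) (h : ev n a ≠ 0) :
    C (ev n a) * PP n (T n a) = BT n (PP n a) := by
  ext k
  rw [coeff_C_mul, coeff_PP]
  split_ifs with hk hk2
  · show ev n a * ((BT n (PP n a)).coeff k / ev n a) = _
    rw [mul_comm, div_mul_cancel₀ _ h]
  · rw [mul_one, hk2, BT_coeff_top _ _ (le_of_eq (PP_natDegree n a))]
    rfl
  · rw [mul_zero]
    exact (coeff_eq_zero_of_natDegree_lt
      (lt_of_le_of_lt (BT_natDegree_le n _) (by omega))).symm

lemma roots_T (n : ℕ) (a : Fin n → ℝ) (h : ev n a ≠ 0) :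
    ((PP n (T n a)).map (algebraMap ℝ ℂ)).roots
      = ((PP n a).map (algebraMap ℝ ℂ)).roots.map (fun z => (z + 1) / (z - 1)) := by
  have h2 := roots_BT n (PP n a) (PP_monic n a) (PP_natDegree n a) h
  rw [← PP_T n a h, Polynomial.map_mul, map_C,
    roots_C_mul _ (by simpa using h : algebraMap ℝ ℂ (ev n a) ≠ 0)] at h2
  exact h2

lemma aeval_zero_iff_root (n : ℕ) (a : Fin n → ℝ) (z : ℂ) :
    aeval z (PP n a) = 0 ↔ z ∈ ((PP n a).map (algebraMap ℝ ℂ)).roots := by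
  rw [mem_roots', IsRoot, eval_map, ← aeval_def]
  constructor
  · intro hz
    exact ⟨((PP_monic n a).map (algebraMap ℝ ℂ)).ne_zero, hz⟩
  · exact fun hz => hz.2

def S1 (n : ℕ) : Set (Fin n → ℝ) :=
  {a | ∀ z : ℂ, aeval z (PP n a) = 0 → ‖z‖ < 1}

def S2 (n : ℕ) : Set (Fin n → ℝ) :=
  {a | ∀ z : ℂ, aeval z (PP n a) = 0 → z.re < 0}

lemma ev_ne_zero_S1 {n : ℕ} {a : Fin n → ℝ} (ha : a ∈ S1 n) : ev n a ≠ 0 := by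
  intro h0
  have h1 : aeval (1 : ℂ) (PP n a) = 0 := by
    have := aeval_algebraMap_apply_eq_algebraMap_eval (A := ℂ) (1 : ℝ) (PP n a)
    simp only [map_one] at this
    rw [this]
    simp [ev] at h0
    simp [h0]
  simpa using ha 1 h1

lemma ev_ne_zero_S2 {n : ℕ} {a : Fin n → ℝ} (ha : a ∈ S2 n) : ev n a ≠ 0 := by
  intro h0
  have h1 : aeval (1 : ℂ) (PP n a) = 0 := by
    have := aeval_algebraMap_apply_eq_algebraMap_eval (A := ℂ) (1 : ℝ) (PP n a)
    simp only [map_one] at this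
    rw [this]
    simp [ev] at h0
    simp [h0]
  have hc := ha 1 h1
  norm_num at hc

lemma T_mem_S2 {n : ℕ} {a : Fin n → ℝ} (ha : a ∈ S1 n) : T n a ∈ S2 n := by
  intro z hz
  have he := ev_ne_zero_S1 ha
  rw [aeval_zero_iff_root, roots_T n a he] at hz
  obtain ⟨w, hw, rfl⟩ := Multiset.mem_map.mp hz
  have hw1 : ‖w‖ < 1 := ha w ((aeval_zero_iff_root n a w).mpr hw)
  have hwne : w - 1 ≠ 0 := by
    refine sub_ne_zero.mpr ?_
    intro h
    subst h
    simp at hw1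
  rw [Complex.div_re, ← add_div]
  apply div_neg_of_neg_of_pos
  · have hnum : (w + 1).re * (w - 1).re + (w + 1).im * (w - 1).im
        = Complex.normSq w - 1 := by
      simp [Complex.normSq_apply, Complex.add_re, Complex.sub_re, Complex.add_im,
        Complex.sub_im]
      ring
    rw [hnum]
    have : Complex.normSq w < 1 := by
      have := Complex.sq_norm w
      nlinarith [norm_nonneg w]
    linarith
  · exact Complex.normSq_pos.mpr hwne

lemma T_mem_S1 {n : ℕ} {a : Fin n → ℝ} (ha : a ∈ S2 n) : T n a ∈ S1 n := by
  intro z hz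
  have he := ev_ne_zero_S2 ha
  rw [aeval_zero_iff_root, roots_T n a he] at hz
  obtain ⟨w, hw, rfl⟩ := Multiset.mem_map.mp hz
  have hw1 : w.re < 0 := ha w ((aeval_zero_iff_root n a w).mpr hw)
  have hwne : w - 1 ≠ 0 := by
    refine sub_ne_zero.mpr ?_
    intro h
    subst h
    norm_num at hw1
  have habs : ‖w + 1‖ < ‖w - 1‖ := by
    rw [Complex.norm_def, Complex.norm_def]
    apply Real.sqrt_lt_sqrt (Complex.normSq_nonneg _)
    simp only [Complex.normSq_apply, Complex.add_re, Complex.add_im, Complex.sub_re,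
      Complex.sub_im, Complex.one_re, Complex.one_im]
    nlinarith
  rw [norm_div, div_lt_one (norm_pos_iff.mpr hwne)]
  exact habs

lemma T_T (n : ℕ) (a : Fin n → ℝ) (h : ev n a ≠ 0) (h2 : ev n (T n a) ≠ 0) :
    T n (T n a) = a := by
  have hr := roots_T n (T n a) h2
  rw [roots_T n a h, Multiset.map_map] at hr
  have hfix : ∀ z ∈ ((PP n a).map (algebraMap ℝ ℂ)).roots,
      ((fun z : ℂ => (z + 1) / (z - 1)) ∘ fun z : ℂ => (z + 1) / (z - 1)) z = z := by
    intro z hz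
    have hz1 : z ≠ 1 := by
      intro h1
      subst h1
      apply h
      have h3 := ((aeval_zero_iff_root n a 1).mpr hz)
      have h4 := aeval_algebraMap_apply_eq_algebraMap_eval (A := ℂ) (1 : ℝ) (PP n a)
      simp only [map_one] at h4
      rw [h4] at h3
      simpa [ev] using h3
    have hzs : z - 1 ≠ 0 := sub_ne_zero.mpr hz1
    have e1 : (z + 1) / (z - 1) + 1 = 2 * z / (z - 1) := by
      field_simp
      ring
    have e2 : (z + 1) / (z - 1) - 1 = 2 / (z - 1) := by
      field_simp
      ring
    have h2ne : (2 : ℂ) / (z - 1) ≠ 0 := div_ne_zero two_ne_zero hzs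
    simp only [Function.comp_apply]
    rw [e1, e2, div_eq_iff h2ne]
    field_simp
  rw [Multiset.map_congr rfl hfix] at hr
  simp only [Multiset.map_id'] at hr
  have c1 : Multiset.card (((PP n (T n (T n a))).map (algebraMap ℝ ℂ)).roots)
      = ((PP n (T n (T n a))).map (algebraMap ℝ ℂ)).natDegree :=
    splits_iff_card_roots.mp (IsAlgClosed.splits _)
  have c2 : Multiset.card (((PP n a).map (algebraMap ℝ ℂ)).roots)
      = ((PP n a).map (algebraMap ℝ ℂ)).natDegree :=
    splits_iff_card_roots.mp (IsAlgClosed.splits _)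
  have hPP : (PP n (T n (T n a))).map (algebraMap ℝ ℂ) = (PP n a).map (algebraMap ℝ ℂ) := by
    rw [← prod_multiset_X_sub_C_of_monic_of_roots_card_eq
        ((PP_monic n (T n (T n a))).map _) c1,
      ← prod_multiset_X_sub_C_of_monic_of_roots_card_eq ((PP_monic n a).map _) c2, hr]
  have heq : PP n (T n (T n a)) = PP n a :=
    Polynomial.map_injective _ (algebraMap ℝ ℂ).injective hPP
  funext i
  have h3 := congrArg (fun p : ℝ[X] => p.coeff (i : ℕ)) heq
  simp only [coeff_PP, dif_pos i.isLt] at h3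
  simpa using h3

lemma continuous_ev (n : ℕ) : Continuous (ev n) := by
  have hev : ev n = fun a => 1 + ∑ i, a i := by
    funext a
    simp [ev, PP, eval_finset_sum]
  rw [hev]
  exact continuous_const.add (continuous_finset_sum _ fun i _ => continuous_apply i)

lemma continuous_coeff_PP (n k : ℕ) : Continuous fun a : Fin n → ℝ => (PP n a).coeff k := by
  by_cases h : k < n
  · have he : (fun a : Fin n → ℝ => (PP n a).coeff k) = fun a => a ⟨k, h⟩ := by
      funext a; rw [coeff_PP, dif_pos h]
    rw [he]
    exact continuous_apply _
  · have he : (fun a : Fin n → ℝ => (PP n a).coeff k) = fun _ => if k = n then 1 else 0 := by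
      funext a; rw [coeff_PP, dif_neg h]
    rw [he]
    exact continuous_const

lemma continuous_coeff_BT (n i : ℕ) :
    Continuous fun a : Fin n → ℝ => (BT n (PP n a)).coeff i := by
  have he : (fun a : Fin n → ℝ => (BT n (PP n a)).coeff i)
      = fun a => ∑ k ∈ Finset.range (n + 1),
          (PP n a).coeff k * (((X + 1 : ℝ[X]) ^ k * (X - 1) ^ (n - k)).coeff i) := by
    funext a
    rw [BT, finset_sum_coeff]
    exact Finset.sum_congr rfl fun k _ => coeff_C_mul _
  rw [he]
  exact continuous_finset_sum _ fun k _ => (continuous_coeff_PP n k).mul continuous_const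

def theHomeo (n : ℕ) : S1 n ≃ₜ S2 n where
  toFun a := ⟨T n a.1, T_mem_S2 a.2⟩
  invFun a := ⟨T n a.1, T_mem_S1 a.2⟩
  left_inv a := Subtype.ext
    (T_T n a.1 (ev_ne_zero_S1 a.2) (ev_ne_zero_S2 (T_mem_S2 a.2)))
  right_inv a := Subtype.ext
    (T_T n a.1 (ev_ne_zero_S2 a.2) (ev_ne_zero_S1 (T_mem_S1 a.2)))
  continuous_toFun := by
    apply Continuous.subtype_mk
    apply continuous_pi
    intro i
    exact ((continuous_coeff_BT n i).comp continuous_subtype_val).div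
      ((continuous_ev n).comp continuous_subtype_val) fun a => ev_ne_zero_S1 a.2
  continuous_invFun := by
    apply Continuous.subtype_mk
    apply continuous_pi
    intro i
    exact ((continuous_coeff_BT n i).comp continuous_subtype_val).div
      ((continuous_ev n).comp continuous_subtype_val) fun a => ev_ne_zero_S2 a.2

end SchurHurwitzAux

end SchurHurwitzAux

/-- The set of coefficient vectors of monic real degree-`n` polynomials
with all roots in the open unit disk is homeomorphic to the set of those with all
roots in the open left half-plane, via the bilinear transform `λ ↦ (λ+1)/(λ−1)`
applied to the roots. -/
theorem schur_hurwitz_coeff_homeomorph (n : ℕ) :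
    ∃ h : {a : Fin n → ℝ |
        ∀ z : ℂ, aeval z (X ^ n + ∑ i : Fin n, C (a i) * X ^ (i : ℕ) : ℝ[X]) = 0 →
          ‖z‖ < 1} ≃ₜ
      {a : Fin n → ℝ |
        ∀ z : ℂ, aeval z (X ^ n + ∑ i : Fin n, C (a i) * X ^ (i : ℕ) : ℝ[X]) = 0 →
          z.re < 0},
      ∀ a, ((X ^ n + ∑ i : Fin n, C ((h a : Fin n → ℝ) i) * X ^ (i : ℕ) : ℝ[X]).map
            (algebraMap ℝ ℂ)).roots =
        Multiset.map (fun z : ℂ => (z + 1) / (z - 1))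
          ((X ^ n + ∑ i : Fin n, C ((a : Fin n → ℝ) i) * X ^ (i : ℕ) : ℝ[X]).map
            (algebraMap ℝ ℂ)).roots := by
  exact ⟨SchurHurwitzAux.theHomeo n,
    fun a => SchurHurwitzAux.roots_T n a.1 (SchurHurwitzAux.ev_ne_zero_S1 a.2)⟩
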